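/- If a K-graph D has at least one transversal edge, then there is a semipath a_1,...,a_n of D with n≥2 whose connecting edges are exactly the transversal edges of D; moreover this semipath is unique up to reversal (i.e., any semipath of D whose connecting edges are exactly the transversal edges of D is this semipath or its reversed sequence). -/

import Mathlib

namespace PluralCuts

/-- The two horizontal directions: west and east. -/
inductive XDir : Type
  | W
  | E
deriving DecidableEq

/-- The two vertical directions: north and south. -/
inductive YDir : Type
  | N
  | S
deriving DecidableEq

/-- The other element of `{W, E}`. -/
def XDir.other : XDir → XDir
  | .W => .E
  | .E => .W

/-- A helper choosing between two values according to an `XDir`. -/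
def pick {α : Type*} (w e : α) : XDir → α
  | .W => w
  | .E => e

/-- A digraph on (a finite set of) natural-number vertices: a finite set of
vertices together with a finite set of edges (ordered pairs). -/
structure DG : Type where
  verts : Finset ℕ
  edges : Finset (ℕ × ℕ)

namespace DG

/-- `D` is an oriented graph: edges lie between vertices, the edge relation is
irreflexive and antisymmetric, and the vertex set is nonempty. -/
def IsOriented (D : DG) : Prop :=
  (∀ e ∈ D.edges, e.1 ∈ D.verts ∧ e.2 ∈ D.verts) ∧
  (∀ e ∈ D.edges, e.1 ≠ e.2) ∧
  (∀ a b : ℕ, (a, b) ∈ D.edges → (b, a) ∉ D.edges) ∧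
  D.verts.Nonempty

/-- A `W`-vertex: no edge ends in it. -/
def isWVert (D : DG) (a : ℕ) : Prop := a ∈ D.verts ∧ ∀ b, (b, a) ∉ D.edges

/-- An `E`-vertex: no edge begins in it. -/
def isEVert (D : DG) (a : ℕ) : Prop := a ∈ D.verts ∧ ∀ b, (a, b) ∉ D.edges

/-- An inner vertex: some edge ends in it and some edge begins in it. -/
def isInner (D : DG) (a : ℕ) : Prop :=
  a ∈ D.verts ∧ (∃ b, (b, a) ∈ D.edges) ∧ (∃ b, (a, b) ∈ D.edges)

/-- A `W`-edge: an edge beginning in a `W`-vertex. -/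
def isWEdge (D : DG) (e : ℕ × ℕ) : Prop := e ∈ D.edges ∧ D.isWVert e.1

/-- An `E`-edge: an edge ending in an `E`-vertex. -/
def isEEdge (D : DG) (e : ℕ × ℕ) : Prop := e ∈ D.edges ∧ D.isEVert e.2

/-- An `X`-edge, for `X ∈ {W, E}`. -/
def isXEdge (D : DG) : XDir → (ℕ × ℕ) → Prop
  | .W => D.isWEdge
  | .E => D.isEEdge

/-- An inner edge: it begins and ends in inner vertices. -/
def isInnerEdge (D : DG) (e : ℕ × ℕ) : Prop :=
  e ∈ D.edges ∧ D.isInner e.1 ∧ D.isInner e.2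

/-- A functional `W`-edge `(a,b)`: `(a,c) ∈ D` implies `b = c`. -/
def funcWEdge (D : DG) (e : ℕ × ℕ) : Prop :=
  D.isWEdge e ∧ ∀ c, (e.1, c) ∈ D.edges → c = e.2

/-- A functional `E`-edge `(b,a)`: `(c,a) ∈ D` implies `b = c`. -/
def funcEEdge (D : DG) (e : ℕ × ℕ) : Prop :=
  D.isEEdge e ∧ ∀ c, (c, e.2) ∈ D.edges → c = e.1

/-- `D` is `W`-`E`-functional: all its `W`-edges and `E`-edges are functional. -/
def WEFunctional (D : DG) : Prop :=
  (∀ e, D.isWEdge e → D.funcWEdge e) ∧ (∀ e, D.isEEdge e → D.funcEEdge e)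

/-- Semi-adjacency: `(a,b)` or `(b,a)` is an edge. -/
def semiAdj (D : DG) (a b : ℕ) : Prop := (a, b) ∈ D.edges ∨ (b, a) ∈ D.edges

/-- A semipath: a nonempty sequence of mutually distinct vertices in which any
two consecutive vertices are semi-adjacent. -/
def IsSemipath (D : DG) (l : List ℕ) : Prop :=
  l ≠ [] ∧ (∀ a ∈ l, a ∈ D.verts) ∧ l.Nodup ∧ l.Chain' D.semiAdj

/-- A path: a nonempty sequence of mutually distinct vertices in which
`(a_i, a_{i+1})` is an edge for consecutive vertices. -/
def IsPath (D : DG) (l : List ℕ) : Prop :=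
  l ≠ [] ∧ (∀ a ∈ l, a ∈ D.verts) ∧ l.Nodup ∧
    l.Chain' (fun a b => (a, b) ∈ D.edges)

/-- A semicycle: a sequence `a_1, ..., a_n` of vertices with `n ≥ 4`,
`a_1 = a_n`, `a_1, ..., a_{n-1}` mutually distinct, and consecutive vertices
semi-adjacent. -/
def IsSemicycle (D : DG) (l : List ℕ) : Prop :=
  4 ≤ l.length ∧ (∀ a ∈ l, a ∈ D.verts) ∧ l.head? = l.getLast? ∧
  l.dropLast.Nodup ∧ l.Chain' D.semiAdj

/-- `D` is weakly connected: every two vertices are joined by a semipath. -/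
def WeaklyConnected (D : DG) : Prop :=
  ∀ a ∈ D.verts, ∀ b ∈ D.verts,
    ∃ l, D.IsSemipath l ∧ l.head? = some a ∧ l.getLast? = some b

/-- `D` is asemicyclic: it has no semicycles. -/
def Asemicyclic (D : DG) : Prop := ∀ l, ¬ D.IsSemicycle l

/-- The cut `D_W[e_W - e_E]D_E`:
`(D_W - {e_W}) ∪ (D_E - {e_E}) ∪ {(e_W.1, e_E.2)}` on the union of the vertex
sets with `e_W.2` and `e_E.1` omitted. -/
def cut (DW DE : DG) (eW eE : ℕ × ℕ) : DG where
  verts := (DW.verts ∪ DE.verts) \ {eW.2, eE.1}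
  edges := insert (eW.1, eE.2) ((DW.edges.erase eW) ∪ (DE.edges.erase eE))

end DG

/-- The type of assignments of four distinguished edges `NW, SW, NE, SE`. -/
abbrev DistE : Type := YDir → XDir → ℕ × ℕ

/-- The type of labellings assigning to (inner) vertices four edges. -/
abbrev Lab : Type := ℕ → YDir → XDir → ℕ × ℕ

/-- `⟨D, ε⟩` is a basic K-graph: `D` is an oriented graph with a single inner
vertex `b`, all edges begin or end in `b`, every other vertex is joined to `b`
by an edge, there is at least one edge ending in `b` and one beginning in `b`,
the distinguished edges `ε Y W` end in `b` and `ε Y E` begin in `b`, and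
(XYB): if there are at least two `X`-edges then `NX ≠ SX`. -/
def IsBasicK (D : DG) (ε : DistE) : Prop :=
  D.IsOriented ∧
  ∃ b ∈ D.verts,
    (∀ e ∈ D.edges, e.1 = b ∨ e.2 = b) ∧
    (∀ v ∈ D.verts, v = b ∨ (v, b) ∈ D.edges ∨ (b, v) ∈ D.edges) ∧
    (∃ a, (a, b) ∈ D.edges) ∧ (∃ c, (b, c) ∈ D.edges) ∧
    (∀ Y : YDir, ε Y XDir.W ∈ D.edges ∧ (ε Y XDir.W).2 = b ∧
      ε Y XDir.E ∈ D.edges ∧ (ε Y XDir.E).1 = b) ∧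
    (2 ≤ (D.edges.filter (fun e => e.2 = b)).card →
      ε YDir.N XDir.W ≠ ε YDir.S XDir.W) ∧
    (2 ≤ (D.edges.filter (fun e => e.1 = b)).card →
      ε YDir.N XDir.E ≠ ε YDir.S XDir.E)

/-- `⟨D, ε⟩` is a basic Q-graph: as a basic K-graph but with no requirement
(XYB) on the distinguished edges. -/
def IsBasicQ (D : DG) (ε : DistE) : Prop :=
  D.IsOriented ∧
  ∃ b ∈ D.verts,
    (∀ e ∈ D.edges, e.1 = b ∨ e.2 = b) ∧
    (∀ v ∈ D.verts, v = b ∨ (v, b) ∈ D.edges ∨ (b, v) ∈ D.edges) ∧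
    (∃ a, (a, b) ∈ D.edges) ∧ (∃ c, (b, c) ∈ D.edges) ∧
    (∀ Y : YDir, ε Y XDir.W ∈ D.edges ∧ (ε Y XDir.W).2 = b ∧
      ε Y XDir.E ∈ D.edges ∧ (ε Y XDir.E).1 = b)

/-- Finite binary trees whose nodes carry an oriented graph, four
distinguished edges, and (at internal nodes) the two cut edges. -/
inductive CTree : Type
  | leaf (D : DG) (ε : DistE)
  | node (D : DG) (ε : DistE) (eW eE : ℕ × ℕ) (l r : CTree)

namespace CTree

/-- The graph at the root of the tree. -/
def rootGraph : CTree → DG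
  | .leaf D _ => D
  | .node D _ _ _ _ _ => D

/-- The distinguished edges at the root of the tree. -/
def dist : CTree → DistE
  | .leaf _ ε => ε
  | .node _ ε _ _ _ _ => ε

/-- The list of graphs-with-distinguished-edges at the leaves of the tree
(the basic K-graphs determining the leaves of a construction). -/
def leaves : CTree → List (DG × DistE)
  | .leaf D ε => [(D, ε)]
  | .node _ _ _ _ l r => l.leaves ++ r.leaves

end CTree

/-- The tree `G_W[e_W - e_E]G_E`, whose root graph is the cut of the root
graphs and whose distinguished edges are given by (XYD). -/
def mkNode (GW GE : CTree) (eW eE : ℕ × ℕ) : CTree :=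
  .node (DG.cut GW.rootGraph GE.rootGraph eW eE)
    (fun Y X =>
      match X with
      | .W => if eE = GE.dist Y XDir.W then GW.dist Y XDir.W else GE.dist Y XDir.W
      | .E => if eW = GW.dist Y XDir.E then GE.dist Y XDir.E else GW.dist Y XDir.E)
    eW eE GW GE

/-- The inductive notion of construction (of a global K-graph). -/
inductive IsConstruction : CTree → Prop
  | leaf (D : DG) (ε : DistE) (h : IsBasicK D ε) : IsConstruction (.leaf D ε)
  | node (D : DG) (ε : DistE) (eW eE : ℕ × ℕ) (GW GE : CTree)
      (hW : IsConstruction GW) (hE : IsConstruction GE)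
      (hdisj : Disjoint GW.rootGraph.verts GE.rootGraph.verts)
      (heW : GW.rootGraph.funcEEdge eW)
      (heE : GE.rootGraph.funcWEdge eE)
      (hD : D = DG.cut GW.rootGraph GE.rootGraph eW eE)
      (hXYC : ∀ Y : YDir, eW = GW.dist Y XDir.E ∨ eE = GE.dist Y XDir.W)
      (hεW : ∀ Y : YDir, ε Y XDir.W =
        if eE = GE.dist Y XDir.W then GW.dist Y XDir.W else GE.dist Y XDir.W)
      (hεE : ∀ Y : YDir, ε Y XDir.E =
        if eW = GW.dist Y XDir.E then GE.dist Y XDir.E else GW.dist Y XDir.E) :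
      IsConstruction (.node D ε eW eE GW GE)

/-- The inductive notion of construction of a global Q-graph: as
`IsConstruction` but with basic Q-graphs at the leaves. -/
inductive IsConstructionQ : CTree → Prop
  | leaf (D : DG) (ε : DistE) (h : IsBasicQ D ε) : IsConstructionQ (.leaf D ε)
  | node (D : DG) (ε : DistE) (eW eE : ℕ × ℕ) (GW GE : CTree)
      (hW : IsConstructionQ GW) (hE : IsConstructionQ GE)
      (hdisj : Disjoint GW.rootGraph.verts GE.rootGraph.verts)
      (heW : GW.rootGraph.funcEEdge eW)
      (heE : GE.rootGraph.funcWEdge eE)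
      (hD : D = DG.cut GW.rootGraph GE.rootGraph eW eE)
      (hXYC : ∀ Y : YDir, eW = GW.dist Y XDir.E ∨ eE = GE.dist Y XDir.W)
      (hεW : ∀ Y : YDir, ε Y XDir.W =
        if eE = GE.dist Y XDir.W then GW.dist Y XDir.W else GE.dist Y XDir.W)
      (hεE : ∀ Y : YDir, ε Y XDir.E =
        if eW = GW.dist Y XDir.E then GE.dist Y XDir.E else GW.dist Y XDir.E) :
      IsConstructionQ (.node D ε eW eE GW GE)

/-- ρ-equivalence of constructions: the least equivalence relation containing
ρ1, ρ2, ρ3 and closed under congruence with respect to cuts. -/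
inductive RhoEquiv : CTree → CTree → Prop
  | rho1 (P Q R : CTree) (eW eE fW fE : ℕ × ℕ)
      (hP : IsConstruction P) (hQ : IsConstruction Q) (hR : IsConstruction R)
      (heW : P.rootGraph.isEEdge eW) (hfW : Q.rootGraph.isEEdge fW)
      (heE : Q.rootGraph.isWEdge eE) (hfE : R.rootGraph.isWEdge fE)
      (h1 : IsConstruction (mkNode (mkNode P Q eW eE) R fW fE))
      (h2 : IsConstruction (mkNode P (mkNode Q R fW fE) eW eE)) :
      RhoEquiv (mkNode (mkNode P Q eW eE) R fW fE)
               (mkNode P (mkNode Q R fW fE) eW eE)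
  | rho2 (P Q R : CTree) (eW eE fW fE : ℕ × ℕ)
      (hP : IsConstruction P) (hQ : IsConstruction Q) (hR : IsConstruction R)
      (heW : P.rootGraph.isEEdge eW) (hfW : P.rootGraph.isEEdge fW)
      (hne : eW ≠ fW)
      (heE : Q.rootGraph.isWEdge eE) (hfE : R.rootGraph.isWEdge fE)
      (h1 : IsConstruction (mkNode (mkNode P Q eW eE) R fW fE))
      (h2 : IsConstruction (mkNode (mkNode P R fW fE) Q eW eE)) :
      RhoEquiv (mkNode (mkNode P Q eW eE) R fW fE)
               (mkNode (mkNode P R fW fE) Q eW eE)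
  | rho3 (P Q R : CTree) (eW eE fW fE : ℕ × ℕ)
      (hP : IsConstruction P) (hQ : IsConstruction Q) (hR : IsConstruction R)
      (heE : P.rootGraph.isWEdge eE) (hfE : P.rootGraph.isWEdge fE)
      (hne : eE ≠ fE)
      (heW : Q.rootGraph.isEEdge eW) (hfW : R.rootGraph.isEEdge fW)
      (h1 : IsConstruction (mkNode R (mkNode Q P eW eE) fW fE))
      (h2 : IsConstruction (mkNode Q (mkNode R P fW fE) eW eE)) :
      RhoEquiv (mkNode R (mkNode Q P eW eE) fW fE)
               (mkNode Q (mkNode R P fW fE) eW eE)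
  | congr (G1 G2 H1 H2 : CTree) (eW eE : ℕ × ℕ)
      (h12 : RhoEquiv G1 G2) (h34 : RhoEquiv H1 H2)
      (hc1 : IsConstruction (mkNode G1 H1 eW eE))
      (hc2 : IsConstruction (mkNode G2 H2 eW eE)) :
      RhoEquiv (mkNode G1 H1 eW eE) (mkNode G2 H2 eW eE)
  | refl (G : CTree) (h : IsConstruction G) : RhoEquiv G G
  | symm {G H : CTree} (h : RhoEquiv G H) : RhoEquiv H G
  | trans {G H K : CTree} (h1 : RhoEquiv G H) (h2 : RhoEquiv H K) :
      RhoEquiv G K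

/-- The class `[G]`: all constructions with the same root graph as `G` whose
leaves are determined by the same basic K-graphs as those of `G`. -/
def classOf (G : CTree) : Set CTree :=
  {H | IsConstruction H ∧ H.rootGraph = G.rootGraph ∧
    ∀ p : DG × DistE, p ∈ H.leaves ↔ p ∈ G.leaves}

/-- Renaming the vertices of a digraph along a function. -/
def DG.rename (f : ℕ → ℕ) (D : DG) : DG where
  verts := D.verts.image f
  edges := D.edges.image (fun e => (f e.1, f e.2))

/-- Renaming the vertices throughout a tree. -/
def CTree.rename (f : ℕ → ℕ) : CTree → CTree
  | .leaf D ε => .leaf (DG.rename f D) (fun Y X => (f (ε Y X).1, f (ε Y X).2))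
  | .node D ε eW eE l r =>
      .node (DG.rename f D) (fun Y X => (f (ε Y X).1, f (ε Y X).2))
        (f eW.1, f eW.2) (f eE.1, f eE.2) (l.rename f) (r.rename f)

/-- σ-equivalence: `H` is obtained from `G` by a bijective renaming of
vertices that fixes the root vertices (so only secondary vertices may be
renamed). -/
def SigmaEquiv (G H : CTree) : Prop :=
  ∃ f : ℕ ≃ ℕ, (∀ v ∈ G.rootGraph.verts, f v = v) ∧ H = G.rename f

/-- The global compass graph `‖G‖`: all constructions σ-equivalent to a
construction in `[G]`. -/
def normClass (G : CTree) : Set CTree :=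
  {H | ∃ K ∈ classOf G, SigmaEquiv K H}

/-- The labelling `L` of `λ(G) = ⟨D, L⟩`, defined by induction on `G`: at a
leaf given by a basic K-graph with inner vertex `b`, `YX(b) = YX(B)`; at a
node, the value is inherited from the appropriate subtree unless it is one of
the two cut edges, in which case it is the new edge introduced by the cut. -/
def lamG : CTree → Lab
  | .leaf _ ε => fun _ => ε
  | .node _ _ eW eE l r => fun a Y X =>
      let v := if a ∈ l.rootGraph.verts then lamG l a Y X else lamG r a Y X
      if v = eW ∨ v = eE then (eW.1, eE.2) else v

/-- `L` assigns to every inner vertex `a` edges `L a Y W` ending in `a` and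
edges `L a Y E` beginning in `a`. -/
def ProperLab (D : DG) (L : Lab) : Prop :=
  ∀ a, D.isInner a → ∀ Y : YDir,
    L a Y XDir.W ∈ D.edges ∧ (L a Y XDir.W).2 = a ∧
    L a Y XDir.E ∈ D.edges ∧ (L a Y XDir.E).1 = a

/-- `⟨D, L⟩` separates `N` from `S`. -/
def SeparatesNS (D : DG) (L : Lab) : Prop :=
  ∀ a, D.isInner a →
    (2 ≤ (D.edges.filter (fun e => e.2 = a)).card →
      L a YDir.N XDir.W ≠ L a YDir.S XDir.W) ∧
    (2 ≤ (D.edges.filter (fun e => e.1 = a)).card →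
      L a YDir.N XDir.E ≠ L a YDir.S XDir.E)

/-- A list `a_1, ..., a_n` is `Y`-decent in `⟨D, L⟩`: `n = 1`, or
`YE(a_1) = (a_1, a_2)`, or `YW(a_n) = (a_{n-1}, a_n)`. -/
def Ydecent (L : Lab) (Y : YDir) (l : List ℕ) : Prop :=
  ∀ a b t, l = a :: b :: t →
    (L a Y XDir.E = (a, b) ∨
      ∃ c d t', l.reverse = d :: c :: t' ∧ L d Y XDir.W = (c, d))

/-- `⟨D, L⟩` is a local compass graph. -/
def IsLocalCompass (D : DG) (L : Lab) : Prop :=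
  D.IsOriented ∧ ProperLab D L ∧
  D.WeaklyConnected ∧ D.Asemicyclic ∧ D.WEFunctional ∧ (∃ a, D.isInner a) ∧
  SeparatesNS D L ∧
  (∀ l, D.IsPath l → Ydecent L YDir.N l ∧ Ydecent L YDir.S l)

/-- A path (list) covers an edge `g` when `g` is a pair of consecutive
vertices of the list. -/
def covers (l : List ℕ) (g : ℕ × ℕ) : Prop := g ∈ l.zip l.tail

/-- A `YX`-edge in `⟨D, L⟩`. -/
def YXedge (D : DG) (L : Lab) (Y : YDir) : XDir → (ℕ × ℕ) → Prop
  | .W, g => g ∈ D.edges ∧ (L g.2 Y XDir.W = g ∨ D.isEEdge g)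
  | .E, g => g ∈ D.edges ∧ (L g.1 Y XDir.E = g ∨ D.isWEdge g)

/-- A proper semipath: a semipath such that neither it nor its reverse is a
path. -/
def ProperSemipath (D : DG) (l : List ℕ) : Prop :=
  D.IsSemipath l ∧ ¬ D.IsPath l ∧ ¬ D.IsPath l.reverse

/-- A transversal edge `(a,b)`: there is a proper semipath beginning with
`a, b` and a proper semipath beginning with `b, a`. -/
def Transversal (D : DG) (e : ℕ × ℕ) : Prop :=
  e ∈ D.edges ∧
  (∃ t, ProperSemipath D (e.1 :: e.2 :: t)) ∧
  (∃ t, ProperSemipath D (e.2 :: e.1 :: t))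

/-- The edge of `D` that connects two semi-adjacent vertices `a` and `b`. -/
def connEdge (D : DG) (a b : ℕ) : ℕ × ℕ :=
  if (a, b) ∈ D.edges then (a, b) else (b, a)

/-- The connecting edges of a list: the edges connecting its consecutive
vertices. -/
def connEdges (D : DG) (l : List ℕ) (e : ℕ × ℕ) : Prop :=
  ∃ p ∈ l.zip l.tail, e = connEdge D p.1 p.2

/-- A bifurcation: three distinct edges with a common vertex. -/
def Bifurcation (D : DG) (e1 e2 e3 : ℕ × ℕ) : Prop :=
  e1 ∈ D.edges ∧ e2 ∈ D.edges ∧ e3 ∈ D.edges ∧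
  e1 ≠ e2 ∧ e1 ≠ e3 ∧ e2 ≠ e3 ∧
  ∃ v, (v = e1.1 ∨ v = e1.2) ∧ (v = e2.1 ∨ v = e2.2) ∧ (v = e3.1 ∨ v = e3.2)

/-- A K-graph: a weakly connected, asemicyclic, `W`-`E`-functional oriented
graph with an inner vertex in which no bifurcation is transversal. -/
def IsKGraph (D : DG) : Prop :=
  D.IsOriented ∧ D.WeaklyConnected ∧ D.Asemicyclic ∧ D.WEFunctional ∧
  (∃ a, D.isInner a) ∧
  ∀ e1 e2 e3, Bifurcation D e1 e2 e3 →
    ¬ (Transversal D e1 ∧ Transversal D e2 ∧ Transversal D e3)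

/-- A Q-graph: a weakly connected, asemicyclic, `W`-`E`-functional oriented
graph with an inner vertex. -/
def IsQGraph (D : DG) : Prop :=
  D.IsOriented ∧ D.WeaklyConnected ∧ D.Asemicyclic ∧ D.WEFunctional ∧
  ∃ a, D.isInner a


section Lemmas

open List

variable {D : DG}

/-! ### Basic facts -/

lemma semiAdj_symm {a b : ℕ} (h : D.semiAdj a b) : D.semiAdj b a := h.elim .inr .inl

lemma semiAdj_ne (hor : D.IsOriented) {a b : ℕ} (h : D.semiAdj a b) : a ≠ b := by
  rcases h with h | h
  · exact hor.2.1 _ h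
  · exact (hor.2.1 _ h).symm

lemma semiAdj_mem_left (hor : D.IsOriented) {a b : ℕ} (h : D.semiAdj a b) : a ∈ D.verts := by
  rcases h with h | h
  · exact (hor.1 _ h).1
  · exact (hor.1 _ h).2

lemma semiAdj_mem_right (hor : D.IsOriented) {a b : ℕ} (h : D.semiAdj a b) : b ∈ D.verts :=
  semiAdj_mem_left hor (semiAdj_symm h)

lemma connEdge_cases (D : DG) (a b : ℕ) :
    connEdge D a b = (a, b) ∨ connEdge D a b = (b, a) := by
  unfold connEdge; split <;> simp

lemma connEdge_mem {a b : ℕ} (h : D.semiAdj a b) : connEdge D a b ∈ D.edges := by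
  unfold connEdge; split
  · assumption
  · rcases h with h | h
    · contradiction
    · exact h

lemma connEdge_of_mem {a b : ℕ} (h : (a, b) ∈ D.edges) : connEdge D a b = (a, b) := by
  unfold connEdge; split <;> simp_all

lemma connEdge_symm (hor : D.IsOriented) {a b : ℕ} (h : D.semiAdj a b) :
    connEdge D a b = connEdge D b a := by
  unfold connEdge
  rcases h with h | h
  · have h2 := hor.2.2.1 _ _ h
    simp [h, h2]
  · have h2 := hor.2.2.1 _ _ h
    simp [h, h2]

lemma connEdge_endpoint_left (D : DG) (a b : ℕ) :
    a = (connEdge D a b).1 ∨ a = (connEdge D a b).2 := by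
  rcases connEdge_cases D a b with h | h <;> rw [h] <;> simp

lemma connEdge_endpoint_right (D : DG) (a b : ℕ) :
    b = (connEdge D a b).1 ∨ b = (connEdge D a b).2 := by
  rcases connEdge_cases D a b with h | h <;> rw [h] <;> simp

lemma connEdge_endpoints {a b : ℕ} {e : ℕ × ℕ} (h : e = connEdge D a b) :
    (e.1 = a ∧ e.2 = b) ∨ (e.1 = b ∧ e.2 = a) := by
  rcases connEdge_cases D a b with h2 | h2 <;> rw [h2] at h <;> subst h <;> simp

/-! ### zip-tail (consecutive pairs) facts -/

lemma mem_zipTail_iff {l : List ℕ} {p : ℕ × ℕ} :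
    p ∈ l.zip l.tail ↔ ∃ s r, l = s ++ p.1 :: p.2 :: r := by
  constructor
  · intro h
    induction l with
    | nil => simp at h
    | cons a t ih =>
      cases t with
      | nil => simp at h
      | cons b r =>
        rcases (by simpa using h : p = (a, b) ∨ p ∈ (b :: r).zip (b :: r).tail) with h | h
        · exact ⟨[], r, by simp [h]⟩
        · obtain ⟨s, r', hr⟩ := ih h
          exact ⟨a :: s, r', by simp [hr]⟩
  · rintro ⟨s, r, rfl⟩
    induction s with
    | nil => simp
    | cons a s ih =>
      cases s with
      | nil => simp
      | cons b s =>
        have : ((a :: b :: s ++ p.1 :: p.2 :: r).zip (b :: s ++ p.1 :: p.2 :: r)) =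
            (a, b) :: ((b :: s ++ p.1 :: p.2 :: r).zip ((b :: s ++ p.1 :: p.2 :: r).tail)) := rfl
        simp only [cons_append, tail_cons, this, mem_cons]
        right
        exact ih

lemma rel_of_mem_zipTail {R : ℕ → ℕ → Prop} {l : List ℕ} {p : ℕ × ℕ}
    (hc : l.Chain' R) (h : p ∈ l.zip l.tail) : R p.1 p.2 := by
  rw [mem_zipTail_iff] at h
  obtain ⟨s, r, rfl⟩ := h
  have := hc.suffix (l₁ := p.1 :: p.2 :: r) ⟨s, rfl⟩
  exact (List.isChain_cons_cons.mp this).1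

lemma mem_of_mem_zipTail {l : List ℕ} {p : ℕ × ℕ} (h : p ∈ l.zip l.tail) :
    p.1 ∈ l ∧ p.2 ∈ l := by
  rw [mem_zipTail_iff] at h
  obtain ⟨s, r, rfl⟩ := h
  constructor <;> simp


/-! ### Semipath structural lemmas -/

lemma chain'_semiAdj_reverse {l : List ℕ} (h : l.Chain' D.semiAdj) :
    l.reverse.Chain' D.semiAdj := by
  rw [List.Chain', List.isChain_reverse]
  exact List.IsChain.imp (fun a b hab => semiAdj_symm hab) h

lemma DG.IsSemipath.reverse {l : List ℕ} (h : D.IsSemipath l) : D.IsSemipath l.reverse :=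
  ⟨by simpa using h.1, fun a ha => h.2.1 a (by simpa using ha), by simpa using h.2.2.1,
    chain'_semiAdj_reverse h.2.2.2⟩

lemma DG.IsSemipath.infix {l l' : List ℕ} (h : D.IsSemipath l) (hi : l' <:+: l)
    (hne : l' ≠ []) : D.IsSemipath l' :=
  ⟨hne, fun a ha => h.2.1 a (hi.subset ha), h.2.2.1.sublist hi.sublist, h.2.2.2.infix hi⟩

lemma DG.IsSemipath.cons {l : List ℕ} {c x : ℕ} (h : D.IsSemipath l) (hor : D.IsOriented)
    (hx : l.head? = some x) (hadj : D.semiAdj c x) (hnm : c ∉ l) :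
    D.IsSemipath (c :: l) := by
  refine ⟨by simp, ?_, by simp [h.2.2.1, hnm], ?_⟩
  · intro a ha
    rcases List.mem_cons.mp ha with rfl | ha
    · exact semiAdj_mem_left hor hadj
    · exact h.2.1 a ha
  · refine List.isChain_cons.mpr ⟨?_, h.2.2.2⟩
    intro y hy
    rw [hx] at hy
    cases hy
    exact hadj

lemma head_ne_last_of_nodup {l : List ℕ} (hn : l.Nodup) (hlen : 2 ≤ l.length)
    {x y : ℕ} (hx : l.head? = some x) (hy : l.getLast? = some y) : x ≠ y := by
  match l, hlen with
  | a :: b :: t, _ =>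
    cases hx
    have : y ∈ b :: t := by
      have hy2 : (b :: t).getLast? = some y := by
        rwa [List.getLast?_cons_cons] at hy
      exact List.mem_of_mem_getLast? (hy2 ▸ rfl)
    rintro rfl
    exact (List.nodup_cons.mp hn).1 this

lemma eq_singleton_of_head_eq_last {l : List ℕ} (hn : l.Nodup) (hne : l ≠ [])
    {x : ℕ} (hx : l.head? = some x) (hy : l.getLast? = some x) : l = [x] := by
  match l with
  | [a] => cases hx; rfl
  | a :: b :: t =>
    exfalso
    exact head_ne_last_of_nodup hn (by simp) hx hy rfl

/-- A prefix of length ≥ 2 of `x :: y :: t` has the form `x :: y :: m`. -/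
lemma prefix_shape {x y : ℕ} {t A r : List ℕ} (h : A ++ r = x :: y :: t)
    (hA : 2 ≤ A.length) : ∃ m, A = x :: y :: m := by
  match A, hA with
  | a :: b :: m, _ =>
    simp only [cons_append, List.cons.injEq] at h
    obtain ⟨rfl, rfl, -⟩ := h
    exact ⟨m, rfl⟩

/-! ### The key semicycle lemma and its consequences -/

/-- In an asemicyclic graph, the endpoints of a semipath of length ≥ 3 are not
semi-adjacent. -/
lemma cy (hac : D.Asemicyclic) {l : List ℕ} (hl : D.IsSemipath l) (hlen : 3 ≤ l.length)
    {x y : ℕ} (hx : l.head? = some x) (hy : l.getLast? = some y)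
    (hadj : D.semiAdj y x) : False := by
  refine hac (l ++ [x]) ⟨?_, ?_, ?_, ?_, ?_⟩
  · simp; omega
  · intro a ha
    rcases List.mem_append.mp ha with ha | ha
    · exact hl.2.1 a ha
    · simp at ha
      subst ha
      exact hl.2.1 a (List.mem_of_mem_head? (hx ▸ rfl))
  · rw [List.getLast?_concat]
    cases l with
    | nil => cases hx
    | cons a t => simpa using hx
  · rw [List.dropLast_concat]
    exact hl.2.2.1
  · rw [List.Chain', List.isChain_append]
    refine ⟨hl.2.2.2, List.IsChain.singleton x, ?_⟩
    intro a ha b hb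
    rw [hy] at ha
    cases ha
    simp at hb
    subst hb
    exact hadj

/-- A vertex adjacent to the start of a semipath, other than the second vertex,
does not occur in the semipath. -/
lemma noReturn (hor : D.IsOriented) (hac : D.Asemicyclic) {a b c : ℕ} {t : List ℕ}
    (hl : D.IsSemipath (a :: b :: t)) (hadj : D.semiAdj c a) (hcb : c ≠ b) :
    c ∉ a :: b :: t := by
  intro hc
  have hca : c ≠ a := semiAdj_ne hor hadj
  have hct : c ∈ t := by
    rcases List.mem_cons.mp hc with h | h
    · exact absurd h hca
    rcases List.mem_cons.mp h with h | h
    · exact absurd h hcb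
    · exact h
  obtain ⟨t₁, t₂, rfl⟩ := List.append_of_mem hct
  have hpre : (a :: b :: (t₁ ++ [c])) <+: (a :: b :: (t₁ ++ c :: t₂)) := ⟨t₂, by simp⟩
  have hsp := hl.infix hpre.isInfix (by simp)
  refine cy hac hsp (by
    simp only [List.length_cons, List.length_append, List.length_singleton]
    omega) (by simp) ?_ hadj
  rw [show a :: b :: (t₁ ++ [c]) = (a :: b :: t₁) ++ [c] by simp, List.getLast?_concat]

/-- A vertex of the tail of a semipath adjacent to the head must be the second
vertex. -/
lemma second (hor : D.IsOriented) (hac : D.Asemicyclic) {x z : ℕ} {p : List ℕ}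
    (hl : D.IsSemipath (x :: p)) (hz : z ∈ p) (hadj : D.semiAdj z x) :
    p.head? = some z := by
  cases p with
  | nil => cases hz
  | cons b t =>
    by_cases hzb : z = b
    · simp [hzb]
    · exact (noReturn hor hac hl hadj hzb (List.mem_cons_of_mem x hz)).elim

/-- Decompose a list at the first element satisfying a predicate. -/
lemma firstMeet {p : List ℕ} {P : ℕ → Prop} (h : ∃ v ∈ p, P v) :
    ∃ m w r, p = m ++ w :: r ∧ P w ∧ ∀ x ∈ m, ¬ P x := by
  classical
  induction p with
  | nil => simp at h
  | cons a p ih =>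
    by_cases ha : P a
    · exact ⟨[], a, p, by simp, ha, by simp⟩
    · obtain ⟨v, hv, hPv⟩ := h
      rcases List.mem_cons.mp hv with rfl | hv
      · exact absurd hPv ha
      · obtain ⟨m, w, r, rfl, hw, hm⟩ := ih ⟨v, hv, hPv⟩
        refine ⟨a :: m, w, r, by simp, hw, ?_⟩
        intro x hx
        rcases List.mem_cons.mp hx with rfl | hx
        · exact ha
        · exact hm x hx

/-- Two semipaths from a common vertex that diverge immediately never meet
again (the "tree lemma"). -/
lemma tl (hor : D.IsOriented) (hac : D.Asemicyclic) {x a b : ℕ} {s t : List ℕ}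
    (h1 : D.IsSemipath (x :: a :: s)) (h2 : D.IsSemipath (x :: b :: t))
    (hab : a ≠ b) {v : ℕ} (hv1 : v ∈ a :: s) (hv2 : v ∈ b :: t) : False := by
  obtain ⟨m₁, w, m₂, hdec, hw, hm₁⟩ := firstMeet (p := a :: s) (P := (· ∈ b :: t))
    ⟨v, hv1, hv2⟩
  obtain ⟨q₁, q₂, hq⟩ := List.append_of_mem hw
  -- the candidate open cycle
  set C : List ℕ := (x :: m₁ ++ [w]) ++ q₁.reverse with hC
  have hs1 : x :: a :: s = (x :: m₁ ++ [w]) ++ m₂ := by simp [hdec]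
  have hxnotin : x ∉ a :: s := (List.nodup_cons.mp h1.2.2.1).1
  have hxnotin2 : x ∉ b :: t := (List.nodup_cons.mp h2.2.2.1).1
  have hnodbt : (b :: t).Nodup := (List.nodup_cons.mp h2.2.2.1).2
  have hwq₁ : w ∉ q₁ := by
    have h' : (q₁ ++ w :: q₂).Nodup := hq ▸ hnodbt
    intro hwq
    exact (List.nodup_append'.mp h').2.2 hwq List.mem_cons_self
  have hq₁bt : ∀ y ∈ q₁, y ∈ b :: t := by
    intro y hy
    rw [hq]
    exact List.mem_append.mpr (Or.inl hy)
  -- nodup of C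
  have hnodC : C.Nodup := by
    have hpre : (x :: m₁ ++ [w]).Nodup := by
      have : (x :: m₁ ++ [w]) <+ (x :: a :: s) := by
        rw [hs1]; exact List.sublist_append_left _ _
      exact this.nodup h1.2.2.1
    have hq₁nod : q₁.Nodup := by
      rw [hq] at hnodbt
      exact (List.nodup_append'.mp hnodbt).1
    rw [hC, List.nodup_append']
    refine ⟨hpre, by simpa using hq₁nod, fun y hy hz' => ?_⟩
    have hz : y ∈ q₁ := List.mem_reverse.mp hz'
    have hybt : y ∈ b :: t := hq₁bt y hz
    rcases List.mem_append.mp hy with hy | hy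
    · rcases List.mem_cons.mp hy with rfl | hy
      · exact hxnotin2 hybt
      · exact hm₁ y hy hybt
    · simp at hy
      subst hy
      exact hwq₁ hz
  -- membership in m₁ / w side
  have hmem1 : ∀ y ∈ x :: m₁ ++ [w], y ∈ x :: a :: s := by
    intro y hy
    rw [hs1]
    exact List.mem_append.mpr (Or.inl hy)
  -- chain of C
  have hchainpre : (x :: m₁ ++ [w]).Chain' D.semiAdj := by
    refine h1.2.2.2.prefix ?_
    rw [hs1]; exact ⟨m₂, rfl⟩
  have hchainbt : (b :: t).Chain' D.semiAdj := (List.isChain_cons_cons.mp h2.2.2.2).2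
  have hchainq : (q₁ ++ w :: q₂).Chain' D.semiAdj := hq ▸ hchainbt
  have hchainC : C.Chain' D.semiAdj := by
    rw [hC, List.Chain', List.isChain_append]
    refine ⟨hchainpre, chain'_semiAdj_reverse ((List.isChain_append.mp hchainq).1), ?_⟩
    intro p hp y hy
    rw [show x :: m₁ ++ [w] = (x :: m₁) ++ [w] by simp, List.getLast?_concat] at hp
    have hpw : p = w := by simpa [eq_comm] using hp
    rw [List.head?_reverse] at hy
    rw [hpw]
    exact semiAdj_symm ((List.isChain_append.mp hchainq).2.2 y hy w (by simp))
  -- head and last of C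
  have hheadC : C.head? = some x := by simp [hC]
  have hlastC : C.getLast? = some b := by
    rw [hC, List.getLast?_append]
    cases q₁ with
    | nil =>
      have hq' : b :: t = w :: q₂ := by simpa using hq
      injection hq' with hwb _
      rw [show x :: m₁ ++ [w] = (x :: m₁) ++ [w] by simp, List.getLast?_concat, ← hwb]
      simp
    | cons c q₁' =>
      have hq' : b :: t = c :: (q₁' ++ w :: q₂) := by simpa using hq
      injection hq' with hcb _
      subst hcb
      rw [List.getLast?_reverse]
      simp
  -- members in verts
  have hmemC : ∀ y ∈ C, y ∈ D.verts := by
    intro y hy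
    rcases List.mem_append.mp hy with hy | hy
    · exact h1.2.1 y (hmem1 y hy)
    · exact h2.2.1 y (List.mem_cons_of_mem x (hq₁bt y (List.mem_reverse.mp hy)))
  have hspC : D.IsSemipath C := ⟨by simp [hC], hmemC, hnodC, hchainC⟩
  -- length ≥ 3
  have hlen : 3 ≤ C.length := by
    have hne : m₁ ≠ [] ∨ q₁ ≠ [] := by
      by_contra hcon
      push_neg at hcon
      obtain ⟨rfl, rfl⟩ := hcon
      have hwa : a :: s = w :: m₂ := by simpa using hdec
      have hwb : b :: t = w :: q₂ := by simpa using hq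
      injection hwa with hwa' _
      injection hwb with hwb' _
      exact hab (hwa' ▸ hwb' ▸ rfl)
    have h1' : 0 < m₁.length ∨ 0 < q₁.length := by
      rcases hne with h | h
      · exact Or.inl (List.length_pos_iff.mpr h)
      · exact Or.inr (List.length_pos_iff.mpr h)
    have hCL : C.length = m₁.length + q₁.length + 2 := by
      rw [hC]
      simp only [List.length_append, List.length_cons, List.length_reverse, List.length_nil]
      omega
    rw [hCL]
    rcases h1' with h | h <;> omega
  exact cy hac hspC hlen hheadC hlastC (semiAdj_symm ((List.isChain_cons_cons.mp h2.2.2.2).1))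

/-! ### Proper semipaths -/

lemma proper_iff {l : List ℕ} (hl : D.IsSemipath l) :
    ProperSemipath D l ↔ ¬ l.Chain' (fun a b => (a, b) ∈ D.edges) ∧
      ¬ l.Chain' (fun a b => (b, a) ∈ D.edges) := by
  constructor
  · rintro ⟨-, h1, h2⟩
    constructor
    · exact fun hc => h1 ⟨hl.1, hl.2.1, hl.2.2.1, hc⟩
    · intro hc
      refine h2 ⟨by simpa using hl.1, fun a ha => hl.2.1 a (List.mem_reverse.mp ha),
        by simpa using hl.2.2.1, ?_⟩
      exact List.isChain_reverse.mpr hc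
  · rintro ⟨h1, h2⟩
    refine ⟨hl, fun hp => h1 hp.2.2.2, fun hp => h2 ?_⟩
    exact List.isChain_reverse.mp hp.2.2.2

lemma proper_of_suffix {l W : List ℕ} (hS : D.IsSemipath l) (hW : D.IsSemipath W)
    (hsuf : W <:+ l) (hp : ProperSemipath D W) : ProperSemipath D l := by
  rw [proper_iff hS]
  rw [proper_iff hW] at hp
  exact ⟨fun hc => hp.1 (hc.suffix hsuf), fun hc => hp.2 (hc.suffix hsuf)⟩

lemma transversal_witness {x y : ℕ} (ht : Transversal D (connEdge D x y)) :
    (∃ t, ProperSemipath D (x :: y :: t)) ∧ (∃ t, ProperSemipath D (y :: x :: t)) := by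
  obtain ⟨-, h1, h2⟩ := ht
  rcases connEdge_cases D x y with h | h <;> rw [h] at h1 h2
  · exact ⟨h1, h2⟩
  · exact ⟨h2, h1⟩

/-- The key "one-sided" lemma: if the first connecting edge of a semipath is
transversal, then for any consecutive pair `p, q` of the semipath there is a
proper semipath beginning with `q, p`. -/
lemma dir1 (hor : D.IsOriented) (hac : D.Asemicyclic) {P : List ℕ} {x y p q : ℕ}
    {t s r : List ℕ} (hP : D.IsSemipath P) (hxy : P = x :: y :: t)
    (htr : Transversal D (connEdge D x y)) (hdec : P = s ++ p :: q :: r) :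
    ∃ u, ProperSemipath D (q :: p :: u) := by
  obtain ⟨-, hw2⟩ := transversal_witness htr
  obtain ⟨w, hW⟩ := hw2
  have hWs : D.IsSemipath (y :: x :: w) := hW.1
  set A := s ++ [p, q] with hA
  have hPA : P = A ++ r := by rw [hdec, hA]; simp
  obtain ⟨m, hm⟩ : ∃ m, A = x :: y :: m := prefix_shape (by rw [← hPA, hxy]) (by simp [hA])
  have hmt : ∀ v ∈ m, v ∈ t := by
    intro v hv
    have : x :: y :: (m ++ r) = x :: y :: t := by
      rw [← hxy, hPA, hm]; simp
    have hmr : m ++ r = t := by simpa using this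
    rw [← hmr]
    exact List.mem_append.mpr (Or.inl hv)
  -- disjointness of A and w
  have hdisj : ∀ v ∈ A, v ∈ w → False := by
    intro v hvA hvw
    rw [hm] at hvA
    have hWnod := hWs.2.2.1
    rcases List.mem_cons.mp hvA with h | hvA
    · exact (List.nodup_cons.mp (List.nodup_cons.mp hWnod).2).1 (by rwa [h] at hvw)
    rcases List.mem_cons.mp hvA with h | hvA
    · exact (List.nodup_cons.mp hWnod).1 (by
        rw [h] at hvw
        exact List.mem_cons_of_mem _ hvw)
    · -- v ∈ m hence v ∈ t
      have hvt : v ∈ t := hmt v hvA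
      cases t with
      | nil => cases hvt
      | cons b' t'' =>
        have htail : D.IsSemipath (y :: b' :: t'') := by
          refine hP.infix ?_ (by simp)
          rw [hxy]
          exact ((y :: b' :: t'').suffix_cons x).isInfix
        have hxb : x ≠ b' := by
          have := hP.2.2.1
          rw [hxy] at this
          intro hcon
          exact (List.nodup_cons.mp this).1 (by rw [hcon]; simp)
        exact tl hor hac hWs htail hxb (List.mem_cons_of_mem x hvw) hvt
  -- S is a semipath
  set S := A.reverse ++ w with hS
  have hAP : ∀ v ∈ A, v ∈ P := by
    intro v hv
    rw [hPA]
    exact List.mem_append.mpr (Or.inl hv)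
  have hWchain := hWs.2.2.2
  have hSsp : D.IsSemipath S := by
    refine ⟨by simp [hS, hA], ?_, ?_, ?_⟩
    · intro v hv
      rcases List.mem_append.mp hv with hv | hv
      · exact hP.2.1 v (hAP v (List.mem_reverse.mp hv))
      · exact hWs.2.1 v (List.mem_cons_of_mem y (List.mem_cons_of_mem x hv))
    · rw [hS, List.nodup_append']
      refine ⟨by
        refine List.nodup_reverse.mpr ?_
        have : A <+ P := hPA ▸ List.sublist_append_left A r
        exact this.nodup hP.2.2.1, ?_, ?_⟩
      · exact (List.nodup_cons.mp (List.nodup_cons.mp hWs.2.2.1).2).2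
      · exact fun v hv hv' => hdisj v (List.mem_reverse.mp hv) hv'
    · rw [hS, List.Chain', List.isChain_append]
      refine ⟨chain'_semiAdj_reverse (hP.2.2.2.prefix (hPA ▸ ⟨r, rfl⟩)), ?_, ?_⟩
      · exact ((List.isChain_cons_cons.mp hWchain).2).tail
      · intro a ha b hb
        rw [List.getLast?_reverse, hm] at ha
        have hax : a = x := by simpa [eq_comm] using ha
        subst hax
        exact (List.isChain_cons.mp (List.isChain_cons_cons.mp hWchain).2).1 b hb
  -- S is proper since it has the proper W as a suffix
  have hsuf : (y :: x :: w) <:+ S := by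
    refine ⟨m.reverse, ?_⟩
    rw [hS, hm]
    simp
  have hSproper : ProperSemipath D S := proper_of_suffix hSsp hWs hsuf hW
  refine ⟨s.reverse ++ w, ?_⟩
  have : S = q :: p :: (s.reverse ++ w) := by rw [hS, hA]; simp
  rwa [this] at hSproper

/-- Every connecting edge of a semipath whose first and last connecting edges
are transversal is itself transversal. -/
lemma middle_transversal (hor : D.IsOriented) (hac : D.Asemicyclic) {P : List ℕ}
    {x y a b : ℕ} {t s₀ : List ℕ} (hP : D.IsSemipath P) (hxy : P = x :: y :: t)
    (hab : P = s₀ ++ [a, b]) (hfst : Transversal D (connEdge D x y))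
    (hlst : Transversal D (connEdge D a b)) {e : ℕ × ℕ} (he : connEdges D P e) :
    Transversal D e := by
  obtain ⟨pr, hpr, hpe⟩ := he
  obtain ⟨s, r, hdec⟩ := mem_zipTail_iff.mp hpr
  have hadj : D.semiAdj pr.1 pr.2 := rel_of_mem_zipTail hP.2.2.2 hpr
  have hEm : e ∈ D.edges := hpe ▸ connEdge_mem hadj
  obtain ⟨u1, hu1⟩ := dir1 hor hac hP hxy hfst hdec
  have hadjab : D.semiAdj a b := by
    refine rel_of_mem_zipTail (p := (a, b)) hP.2.2.2 ?_
    exact mem_zipTail_iff.mpr ⟨s₀, [], by simpa using hab⟩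
  have hPrev : D.IsSemipath P.reverse := hP.reverse
  have hxy' : P.reverse = b :: a :: s₀.reverse := by rw [hab]; simp
  have hdec' : P.reverse = r.reverse ++ pr.2 :: pr.1 :: s.reverse := by rw [hdec]; simp
  have hba : connEdge D b a = connEdge D a b := (connEdge_symm hor hadjab).symm
  obtain ⟨u2, hu2⟩ := dir1 hor hac hPrev hxy' (hba ▸ hlst) hdec'
  refine ⟨hEm, ?_, ?_⟩
  · rcases connEdge_endpoints hpe with ⟨h1, h2⟩ | ⟨h1, h2⟩
    · exact ⟨u2, by rw [h1, h2]; exact hu2⟩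
    · exact ⟨u1, by rw [h1, h2]; exact hu1⟩
  · rcases connEdge_endpoints hpe with ⟨h1, h2⟩ | ⟨h1, h2⟩
    · exact ⟨u1, by rw [h1, h2]; exact hu1⟩
    · exact ⟨u2, by rw [h1, h2]; exact hu2⟩

/-! ### connEdges helpers -/

lemma connEdges_mem_edges {l : List ℕ} {e : ℕ × ℕ} (hl : D.IsSemipath l)
    (he : connEdges D l e) : e ∈ D.edges := by
  obtain ⟨pr, hpr, hpe⟩ := he
  exact hpe ▸ connEdge_mem (rel_of_mem_zipTail hl.2.2.2 hpr)

lemma connEdges_endpoints_mem {l : List ℕ} {e : ℕ × ℕ} (he : connEdges D l e) :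
    e.1 ∈ l ∧ e.2 ∈ l := by
  obtain ⟨pr, hpr, hpe⟩ := he
  have hm := mem_of_mem_zipTail hpr
  rcases connEdge_cases D pr.1 pr.2 with h | h <;> rw [h] at hpe <;> subst hpe
  · exact hm
  · exact ⟨hm.2, hm.1⟩

lemma connEdges_of_decomp {l s₁ r₁ : List ℕ} {u w : ℕ} (hdec : l = s₁ ++ u :: w :: r₁) :
    connEdges D l (connEdge D u w) :=
  ⟨(u, w), mem_zipTail_iff.mpr ⟨s₁, r₁, hdec⟩, rfl⟩

lemma connEdges_rev_aux (hor : D.IsOriented) {l : List ℕ} {e : ℕ × ℕ}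
    (hc : l.Chain' D.semiAdj) (he : connEdges D l e) : connEdges D l.reverse e := by
  obtain ⟨pr, hpr, hpe⟩ := he
  obtain ⟨s, r, hdec⟩ := mem_zipTail_iff.mp hpr
  have hadj : D.semiAdj pr.1 pr.2 := rel_of_mem_zipTail hc hpr
  refine ⟨(pr.2, pr.1), mem_zipTail_iff.mpr ⟨r.reverse, s.reverse, by rw [hdec]; simp⟩, ?_⟩
  rw [hpe, connEdge_symm hor hadj]

lemma connEdges_reverse (hor : D.IsOriented) {l : List ℕ} {e : ℕ × ℕ}
    (hc : l.Chain' D.semiAdj) : connEdges D l.reverse e ↔ connEdges D l e := by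
  constructor
  · intro h
    have := connEdges_rev_aux hor (chain'_semiAdj_reverse hc) h
    rwa [List.reverse_reverse] at this
  · exact connEdges_rev_aux hor hc

/-- If two vertices of a semipath are semi-adjacent, they are consecutive. -/
lemma adjacent_pairs (hor : D.IsOriented) (hac : D.Asemicyclic) {l : List ℕ}
    (hl : D.IsSemipath l) {x y : ℕ} (hx : x ∈ l) (hy : y ∈ l)
    (hadj : D.semiAdj x y) : (x, y) ∈ l.zip l.tail ∨ (y, x) ∈ l.zip l.tail := by
  obtain ⟨s, t, rfl⟩ := List.append_of_mem hx
  rcases List.mem_append.mp hy with hy | hy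
  · -- y occurs before x; work on the reverse
    right
    have hrev : D.IsSemipath ((s ++ x :: t).reverse) := hl.reverse
    have hxs : D.IsSemipath (x :: s.reverse) :=
      hrev.infix (List.IsSuffix.isInfix ⟨t.reverse, by simp⟩) (by simp)
    have hys : y ∈ s.reverse := List.mem_reverse.mpr hy
    have hsec := second hor hac hxs hys (semiAdj_symm hadj)
    obtain ⟨s'', hs''⟩ : ∃ s'', s.reverse = y :: s'' := by
      cases hsr : s.reverse with
      | nil => rw [hsr] at hys; cases hys
      | cons z s'' =>
        rw [hsr] at hsec
        have hz : z = y := by simpa using hsec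
        exact ⟨s'', by rw [hz]⟩
    have hseq : s = s''.reverse ++ [y] := by
      have := congrArg List.reverse hs''
      simpa using this
    exact mem_zipTail_iff.mpr ⟨s''.reverse, t, by rw [hseq]; simp⟩
  · -- y occurs after x
    left
    have hyt : y ∈ t := by
      rcases List.mem_cons.mp hy with h | h
      · exact absurd h (semiAdj_ne hor (semiAdj_symm hadj))
      · exact h
    have hxt : D.IsSemipath (x :: t) := by
      refine hl.infix ?_ (by simp)
      exact (List.suffix_append s (x :: t)).isInfix
    have hsec := second hor hac hxt hyt (semiAdj_symm hadj)
    cases t with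
    | nil => cases hyt
    | cons z t' =>
      have hzy : z = y := by simpa using hsec
      exact mem_zipTail_iff.mpr ⟨s, t', by rw [hzy]⟩

/-- The only connecting edge containing the head of a semipath is the first
connecting edge. -/
lemma head_unique_connEdge {a b : ℕ} {t : List ℕ} {e : ℕ × ℕ}
    (hl : D.IsSemipath (a :: b :: t)) (he : connEdges D (a :: b :: t) e)
    (ha : a = e.1 ∨ a = e.2) : e = connEdge D a b := by
  obtain ⟨pr, hpr, hpe⟩ := he
  obtain ⟨s, r, hdec⟩ := mem_zipTail_iff.mp hpr
  have hnd := hl.2.2.1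
  have hmem : a = pr.1 ∨ a = pr.2 := by
    rcases connEdge_cases D pr.1 pr.2 with h | h <;> rw [hpe, h] at ha
    · simpa using ha
    · exact Or.symm (by simpa using ha)
  cases s with
  | nil =>
    have h1 : a :: b :: t = pr.1 :: pr.2 :: r := by simpa using hdec
    injection h1 with hp1 h2
    injection h2 with hp2 _
    rw [hpe, hp1, hp2]
  | cons a₀ s' =>
    exfalso
    have h1 : a :: b :: t = a₀ :: (s' ++ pr.1 :: pr.2 :: r) := by simpa using hdec
    injection h1 with ha0 h2
    have hnotin : a ∉ b :: t := (List.nodup_cons.mp hnd).1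
    refine hnotin ?_
    rw [h2]
    rcases hmem with h | h <;> rw [h] <;> simp

/-- An interior vertex of a semipath lies on two distinct connecting edges. -/
lemma interior_two_connEdges {l : List ℕ} {v : ℕ} (hl : D.IsSemipath l)
    (hv : v ∈ l) (hvh : l.head? ≠ some v) (hvl : l.getLast? ≠ some v) :
    ∃ e₁ e₂, connEdges D l e₁ ∧ connEdges D l e₂ ∧ e₁ ≠ e₂ ∧
      (v = e₁.1 ∨ v = e₁.2) ∧ (v = e₂.1 ∨ v = e₂.2) := by
  obtain ⟨s, r, rfl⟩ := List.append_of_mem hv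
  have hs : s ≠ [] := by
    rintro rfl
    exact hvh (by simp)
  have hr : r ≠ [] := by
    rintro rfl
    refine hvl ?_
    rw [List.getLast?_append]
    simp
  have hsdec : s = s.dropLast ++ [s.getLast hs] := by
    rw [List.dropLast_append_getLast]
  set u₁ := s.getLast hs with hu₁
  cases hrdec : r with
  | nil => exact absurd hrdec hr
  | cons u₂ r' =>
    have hnd := hl.2.2.1
    have hu₁s : u₁ ∈ s := List.getLast_mem hs
    have hu₁v : u₁ ≠ v := fun hcon =>
      (List.disjoint_of_nodup_append hnd) hu₁s (by rw [hcon]; simp)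
    have hvr : v ∉ r := by
      have := (List.nodup_append'.mp hnd).2.1
      rw [List.nodup_cons] at this
      exact this.1
    have hu₂v : v ≠ u₂ := fun hcon => hvr (by rw [hrdec, hcon]; simp)
    have hu₁u₂ : u₁ ≠ u₂ := by
      intro hcon
      exact (List.disjoint_of_nodup_append hnd) hu₁s
        (by rw [hcon, hrdec]; simp)
    refine ⟨connEdge D u₁ v, connEdge D v u₂, ?_, ?_, ?_, connEdge_endpoint_right D u₁ v,
      connEdge_endpoint_left D v u₂⟩
    · refine connEdges_of_decomp (s₁ := s.dropLast) (r₁ := u₂ :: r') ?_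
      conv_lhs => rw [hsdec]
      simp
    · exact connEdges_of_decomp (s₁ := s) (r₁ := r') rfl
    · rcases connEdge_cases D u₁ v with h1 | h1 <;> rcases connEdge_cases D v u₂ with h2 | h2 <;>
        rw [h1, h2] <;> simp [Prod.ext_iff] <;> tauto

lemma connEdge_self {e : ℕ × ℕ} (he : e ∈ D.edges) : connEdge D e.1 e.2 = e := by
  rw [connEdge_of_mem he]

lemma connEdge_self' (hor : D.IsOriented) {e : ℕ × ℕ} (he : e ∈ D.edges) :
    connEdge D e.2 e.1 = e := by
  rw [connEdge_symm hor (semiAdj_symm (Or.inl he)), connEdge_self he]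

lemma exists_concat_of_getLast? {l : List ℕ} {c : ℕ} (h : l.getLast? = some c) :
    ∃ l', l = l' ++ [c] := by
  have hne : l ≠ [] := by rintro rfl; cases h
  have h2 := List.getLast?_eq_getLast hne
  rw [h2] at h
  have h3 : l.getLast hne = c := by simpa using h
  exact ⟨l.dropLast, by rw [← h3, List.dropLast_append_getLast]⟩

/-- Between any two distinct edges there is a semipath beginning with the
endpoints of one and ending with the endpoints of the other. -/
lemma connect (hor : D.IsOriented) (hac : D.Asemicyclic) (hconn : D.WeaklyConnected)
    {e f : ℕ × ℕ} (he : e ∈ D.edges) (hf : f ∈ D.edges) (hef : e ≠ f) :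
    ∃ P t₀ s₀, D.IsSemipath P ∧
      (P = f.1 :: f.2 :: t₀ ∨ P = f.2 :: f.1 :: t₀) ∧
      (P = s₀ ++ [e.1, e.2] ∨ P = s₀ ++ [e.2, e.1]) := by
  obtain ⟨hx, hy⟩ := hor.1 f hf
  obtain ⟨hc, hd⟩ := hor.1 e he
  obtain ⟨p, hp, hph, hpl⟩ := hconn f.1 hx e.1 hc
  have hfadj : D.semiAdj f.1 f.2 := Or.inl hf
  obtain ⟨p', rfl⟩ : ∃ p', p = f.1 :: p' := by
    cases p with
    | nil => cases hph
    | cons a p' =>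
      have : a = f.1 := by simpa using hph
      exact ⟨p', by rw [this]⟩
  have hstep1 : ∃ P₀ t₀, D.IsSemipath P₀ ∧
      (P₀ = f.1 :: f.2 :: t₀ ∨ P₀ = f.2 :: f.1 :: t₀) ∧ P₀.getLast? = some e.1 := by
    by_cases hyp : f.2 ∈ p'
    · have hsec := second hor hac hp hyp (semiAdj_symm hfadj)
      cases p' with
      | nil => cases hyp
      | cons z p'' =>
        have hz : z = f.2 := by simpa using hsec
        exact ⟨f.1 :: z :: p'', p'', hp, Or.inl (by rw [hz]), hpl⟩
    · refine ⟨f.2 :: f.1 :: p', p', ?_, Or.inr rfl, by rwa [List.getLast?_cons_cons]⟩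
      refine hp.cons hor (by simp) (semiAdj_symm hfadj) ?_
      intro hcon
      rcases List.mem_cons.mp hcon with h | h
      · exact hor.2.1 f hf h.symm
      · exact hyp h
  obtain ⟨P₀, t₀, hP₀, hsh, hlast⟩ := hstep1
  have hcd : D.semiAdj e.1 e.2 := Or.inl he
  by_cases hdP : e.2 ∈ P₀
  · have hrev : D.IsSemipath P₀.reverse := hP₀.reverse
    obtain ⟨R', hR'⟩ : ∃ R', P₀.reverse = e.1 :: R' := by
      cases hPr : P₀.reverse with
      | nil =>
        exfalso
        exact hP₀.1 (by simpa using congrArg List.reverse hPr)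
      | cons a R' =>
        have ha : a = e.1 := by
          have h1 : P₀.reverse.head? = some e.1 := by rw [List.head?_reverse]; exact hlast
          rw [hPr] at h1
          simpa using h1
        exact ⟨R', by rw [ha]⟩
    have hd2 : e.2 ∈ R' := by
      have h1 : e.2 ∈ P₀.reverse := List.mem_reverse.mpr hdP
      rw [hR'] at h1
      rcases List.mem_cons.mp h1 with h | h
      · exact absurd h.symm (hor.2.1 e he)
      · exact h
    have hrev' : D.IsSemipath (e.1 :: R') := by rwa [hR'] at hrev
    have hsec := second hor hac hrev' hd2 (semiAdj_symm hcd)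
    obtain ⟨R'', hR''⟩ : ∃ R'', R' = e.2 :: R'' := by
      cases hR : R' with
      | nil => rw [hR] at hd2; cases hd2
      | cons z R'' =>
        rw [hR] at hsec
        have : z = e.2 := by simpa using hsec
        exact ⟨R'', by rw [this]⟩
    have hP0eq : P₀ = R''.reverse ++ [e.2, e.1] := by
      have h1 : P₀.reverse = e.1 :: e.2 :: R'' := by rw [hR', hR'']
      have := congrArg List.reverse h1
      simpa using this
    exact ⟨P₀, t₀, R''.reverse, hP₀, hsh, Or.inr hP0eq⟩
  · obtain ⟨s₀, hs₀⟩ := exists_concat_of_getLast? hlast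
    refine ⟨P₀ ++ [e.2], t₀ ++ [e.2], s₀, ?_, ?_, Or.inl (by rw [hs₀]; simp)⟩
    · refine ⟨by simp, ?_, ?_, ?_⟩
      · intro v hv
        rcases List.mem_append.mp hv with hv | hv
        · exact hP₀.2.1 v hv
        · simp at hv; rw [hv]; exact hd
      · rw [List.nodup_append']
        exact ⟨hP₀.2.2.1, List.nodup_singleton _, fun v hv hv' => hdP (by
          simp at hv'; rw [← hv']; exact hv)⟩
      · rw [List.Chain', List.isChain_append]
        refine ⟨hP₀.2.2.2, List.IsChain.singleton _, ?_⟩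
        intro a ha b hb
        rw [hlast] at ha
        have ha' : a = e.1 := by simpa [eq_comm] using ha
        have hb' : b = e.2 := by simpa [eq_comm] using hb
        rw [ha', hb']
        exact hcd
    · rcases hsh with h | h
      · exact Or.inl (by rw [h]; simp)
      · exact Or.inr (by rw [h]; simp)

/-- Uniqueness of semipaths between given endpoints. -/
lemma unique_semipath (hor : D.IsOriented) (hac : D.Asemicyclic) {p : List ℕ} :
    ∀ {q : List ℕ}, D.IsSemipath p → D.IsSemipath q →
      p.head? = q.head? → p.getLast? = q.getLast? → p = q := by
  induction p with
  | nil => intro q hp _ _ _; exact absurd rfl hp.1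
  | cons x p' ih =>
    intro q hp hq hh hl
    obtain ⟨q', rfl⟩ : ∃ q', q = x :: q' := by
      cases q with
      | nil => exact absurd rfl hq.1
      | cons z q' =>
        have : z = x := by simpa [eq_comm] using hh
        exact ⟨q', by rw [this]⟩
    cases p' with
    | nil =>
      have hql : (x :: q').getLast? = some x := by rw [← hl]; simp
      exact (eq_singleton_of_head_eq_last hq.2.2.1 (by simp) (by simp) hql).symm
    | cons y p'' =>
      cases q' with
      | nil =>
        exfalso
        have hpl : (x :: y :: p'').getLast? = some x := by rw [hl]; simp
        have := eq_singleton_of_head_eq_last hp.2.2.1 (by simp) (by simp) hpl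
        simp at this
      | cons z q'' =>
        by_cases hyz : y = z
        · have hp' : D.IsSemipath (y :: p'') :=
            hp.infix (List.IsSuffix.isInfix ⟨[x], rfl⟩) (by simp)
          have hq' : D.IsSemipath (z :: q'') :=
            hq.infix (List.IsSuffix.isInfix ⟨[x], rfl⟩) (by simp)
          have hh' : (y :: p'').head? = (z :: q'').head? := by simp [hyz]
          have hl' : (y :: p'').getLast? = (z :: q'').getLast? := by
            rw [← List.getLast?_cons_cons (a := x), ← List.getLast?_cons_cons (a := x)]
            exact hl
          have := ih hp' hq' hh' hl'
          rw [this]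
        · exfalso
          have hne : (y :: p'') ≠ [] := by simp
          set w := (y :: p'').getLast hne with hw
          have hw1 : (y :: p'').getLast? = some w :=
            List.getLast?_eq_getLast hne
          have hwmem : w ∈ y :: p'' := List.getLast_mem hne
          have hl2 : (z :: q'').getLast? = some w := by
            rw [← List.getLast?_cons_cons (a := x), ← hl, List.getLast?_cons_cons]
            exact hw1
          have hwmem2 : w ∈ z :: q'' := List.mem_of_mem_getLast? (hl2 ▸ rfl)
          exact tl hor hac hp hq hyz hwmem hwmem2

end Lemmas
/-- If a K-graph `D` has a transversal edge, then there is a semipath of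
length at least 2 whose connecting edges are exactly the transversal edges of
`D`, and this semipath is unique up to reversal. -/
theorem transversal_semipath (D : DG) (hK : IsKGraph D)
    (h : ∃ e, Transversal D e) :
    ∃ l : List ℕ, D.IsSemipath l ∧ 2 ≤ l.length ∧
      (∀ e, connEdges D l e ↔ Transversal D e) ∧
      ∀ l' : List ℕ, D.IsSemipath l' →
        (∀ e, connEdges D l' e ↔ Transversal D e) →
        l' = l ∨ l' = l.reverse := by
  classical
  obtain ⟨hor, hconn, hac, hwef, hinner, hbif⟩ := hK
  obtain ⟨e₀, he₀⟩ := h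
  set Good : List ℕ → Prop := fun l => D.IsSemipath l ∧ 2 ≤ l.length ∧
    ∀ e, connEdges D l e → Transversal D e with hGoodDef
  have hbound : ∀ l : List ℕ, D.IsSemipath l → l.length ≤ D.verts.card := by
    intro l hl
    calc l.length = l.toFinset.card := (List.toFinset_card_of_nodup hl.2.2.1).symm
    _ ≤ D.verts.card := Finset.card_le_card (fun v hv => hl.2.1 v (List.mem_toFinset.mp hv))
  have hbase : Good [e₀.1, e₀.2] := by
    refine ⟨⟨by simp, ?_, ?_, ?_⟩, by simp, ?_⟩
    · intro a ha
      rcases (by simpa using ha : a = e₀.1 ∨ a = e₀.2) with rfl | rfl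
      · exact (hor.1 e₀ he₀.1).1
      · exact (hor.1 e₀ he₀.1).2
    · simp [hor.2.1 e₀ he₀.1]
    · exact List.isChain_pair.mpr (Or.inl he₀.1)
    · intro e he
      obtain ⟨pr, hpr, hpe⟩ := he
      obtain ⟨s, r, hdec⟩ := mem_zipTail_iff.mp hpr
      have hpr12 : pr.1 = e₀.1 ∧ pr.2 = e₀.2 := by
        cases s with
        | nil =>
          have h1 : [e₀.1, e₀.2] = pr.1 :: pr.2 :: r := by simpa using hdec
          injection h1 with h1a h2
          injection h2 with h2a _
          exact ⟨h1a.symm, h2a.symm⟩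
        | cons a s' =>
          exfalso
          have := congrArg List.length hdec
          simp [List.length_append] at this
          omega
      rw [hpe, hpr12.1, hpr12.2, connEdge_self he₀.1]
      exact he₀
  have hcard2 : 2 ≤ D.verts.card := by
    have := hbound _ hbase.1
    simpa using this
  set n := Nat.findGreatest (fun m => ∃ l, Good l ∧ l.length = m) D.verts.card with hn
  obtain ⟨l, hlG, hln⟩ : ∃ l, Good l ∧ l.length = n := by
    have h2 : ∃ l, Good l ∧ l.length = 2 := ⟨_, hbase, rfl⟩
    exact Nat.findGreatest_spec (P := fun m => ∃ l, Good l ∧ l.length = m) hcard2 h2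
  obtain ⟨hlsp, hllen, hltr⟩ := hlG
  have hn2 : 2 ≤ n := hln ▸ hllen
  have hmax : ∀ l' : List ℕ, Good l' → l'.length ≤ n := by
    intro l' hl'
    by_contra hcon
    push_neg at hcon
    exact Nat.findGreatest_is_greatest hcon (hbound l' hl'.1) ⟨l', hl', rfl⟩
  obtain ⟨v0, v1, lt, hlshape⟩ : ∃ v0 v1 lt, l = v0 :: v1 :: lt := by
    match l, hllen with
    | a :: b :: t, _ => exact ⟨a, b, t, rfl⟩
  have hadj01 : D.semiAdj v0 v1 := by
    have := hlsp.2.2.2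
    rw [hlshape] at this
    exact (List.isChain_cons_cons.mp this).1
  set e₁ := connEdge D v0 v1 with he₁def
  have he₁conn : connEdges D l e₁ := connEdges_of_decomp (s₁ := []) (by simpa using hlshape)
  have he₁E : e₁ ∈ D.edges := connEdge_mem hadj01
  -- completeness: every transversal edge is a connecting edge of l
  have hcomplete : ∀ f, Transversal D f → connEdges D l f := by
    intro f htf
    by_contra hfl
    have hfadj : D.semiAdj f.1 f.2 := Or.inl htf.1
    have hboth : ¬ (f.1 ∈ l ∧ f.2 ∈ l) := by
      rintro ⟨h1, h2⟩
      rcases adjacent_pairs hor hac hlsp h1 h2 hfadj with hpr | hpr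
      · exact hfl ⟨(f.1, f.2), hpr, (connEdge_of_mem htf.1).symm⟩
      · refine hfl ⟨(f.2, f.1), hpr, ?_⟩
        rw [show connEdge D (f.2, f.1).1 (f.2, f.1).2 = connEdge D f.2 f.1 from rfl,
          connEdge_self' hor htf.1]
    have hstep : ∃ g u w, Transversal D g ∧ ¬ connEdges D l g ∧ D.semiAdj u w ∧
        (g = connEdge D u w) ∧ u ∉ l ∧ w ∈ l := by
      by_cases hfin : f.1 ∈ l ∨ f.2 ∈ l
      · rcases hfin with h1 | h2
        · have h2 : f.2 ∉ l := fun h2 => hboth ⟨h1, h2⟩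
          exact ⟨f, f.2, f.1, htf, hfl, semiAdj_symm hfadj,
            (connEdge_self' hor htf.1).symm, h2, h1⟩
        · have h1 : f.1 ∉ l := fun h1 => hboth ⟨h1, h2⟩
          exact ⟨f, f.1, f.2, htf, hfl, hfadj, (connEdge_self htf.1).symm, h1, h2⟩
      · push_neg at hfin
        have he₁tr : Transversal D e₁ := hltr _ he₁conn
        have hne : e₁ ≠ f := fun hcon => hfl (hcon ▸ he₁conn)
        obtain ⟨P, t₀, s₀, hPsp, hPf, hPe⟩ := connect hor hac hconn he₁E htf.1 hne
        have hPtr : ∀ e, connEdges D P e → Transversal D e := by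
          intro e he
          have hfst : ∀ (x y : ℕ) (t : List ℕ), P = x :: y :: t →
              ((x, y) = f ∨ (y, x) = f) → Transversal D (connEdge D x y) := by
            intro x y t _ hc
            rcases hc with hc | hc
            · rw [show connEdge D x y = connEdge D f.1 f.2 by rw [← hc],
                connEdge_self htf.1]
              exact htf
            · rw [show connEdge D x y = connEdge D f.2 f.1 by rw [← hc],
                connEdge_self' hor htf.1]
              exact htf
          have hlst : ∀ (a b : ℕ), ((a, b) = e₁ ∨ (b, a) = e₁) →
              Transversal D (connEdge D a b) := by
            intro a b hc
            rcases hc with hc | hc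
            · rw [show connEdge D a b = connEdge D e₁.1 e₁.2 by rw [← hc],
                connEdge_self he₁E]
              exact he₁tr
            · rw [show connEdge D a b = connEdge D e₁.2 e₁.1 by rw [← hc],
                connEdge_self' hor he₁E]
              exact he₁tr
          rcases hPf with hPf | hPf <;> rcases hPe with hPe | hPe
          · exact middle_transversal hor hac hPsp hPf hPe
              (hfst _ _ _ hPf (Or.inl rfl)) (hlst _ _ (Or.inl rfl)) he
          · exact middle_transversal hor hac hPsp hPf hPe
              (hfst _ _ _ hPf (Or.inl rfl)) (hlst _ _ (Or.inr rfl)) he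
          · exact middle_transversal hor hac hPsp hPf hPe
              (hfst _ _ _ hPf (Or.inr rfl)) (hlst _ _ (Or.inl rfl)) he
          · exact middle_transversal hor hac hPsp hPf hPe
              (hfst _ _ _ hPf (Or.inr rfl)) (hlst _ _ (Or.inr rfl)) he
        have he₁l : e₁.1 ∈ l := by
          rcases connEdge_cases D v0 v1 with h | h <;> rw [he₁def, h] <;> rw [hlshape] <;> simp
        have he₁P : e₁.1 ∈ P := by
          rcases hPe with h | h <;> rw [h] <;> simp
        obtain ⟨m, w, r, hPdec, hwl, hm⟩ := firstMeet (P := (· ∈ l)) ⟨e₁.1, he₁P, he₁l⟩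
        have hm_ne : m ≠ [] := by
          rintro rfl
          simp only [List.nil_append] at hPdec
          rcases hPf with h | h
          · rw [h] at hPdec
            injection hPdec with h1 _
            exact hfin.1 (by rw [h1]; exact hwl)
          · rw [h] at hPdec
            injection hPdec with h1 _
            exact hfin.2 (by rw [h1]; exact hwl)
        obtain ⟨u, m', rfl⟩ : ∃ u m', m = m' ++ [u] :=
          ⟨m.getLast hm_ne, m.dropLast, (List.dropLast_append_getLast hm_ne).symm⟩
        have hul : u ∉ l := hm u (by simp)
        have hPdec' : P = m' ++ u :: w :: r := by rw [hPdec]; simp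
        have hadjuw : D.semiAdj u w :=
          rel_of_mem_zipTail (p := (u, w)) hPsp.2.2.2 (mem_zipTail_iff.mpr ⟨m', r, hPdec'⟩)
        have hgtr : Transversal D (connEdge D u w) :=
          hPtr _ (connEdges_of_decomp (u := u) (w := w) hPdec')
        have hgnl : ¬ connEdges D l (connEdge D u w) := by
          intro hcon
          have hmm := connEdges_endpoints_mem hcon
          rcases connEdge_cases D u w with h | h <;> rw [h] at hmm
          · exact hul hmm.1
          · exact hul hmm.2
        exact ⟨connEdge D u w, u, w, hgtr, hgnl, hadjuw, rfl, hul, hwl⟩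
    obtain ⟨g, u, w, hgt, hgnl, hadjuw, hgeq, hul, hwl⟩ := hstep
    -- extension helper
    have hext : ∀ (l₁ : List ℕ), D.IsSemipath l₁ → l₁.length = n →
        (∀ e, connEdges D l₁ e → Transversal D e) → l₁.head? = some w →
        u ∉ l₁ → False := by
      intro l₁ hsp₁ hlen₁ htr₁ hh₁ hul₁
      have hcons : D.IsSemipath (u :: l₁) := hsp₁.cons hor hh₁ hadjuw hul₁
      have hG : Good (u :: l₁) := by
        refine ⟨hcons, by simp; omega, ?_⟩
        intro e he
        obtain ⟨pr, hpr, hpe⟩ := he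
        obtain ⟨s, r, hdec⟩ := mem_zipTail_iff.mp hpr
        cases s with
        | nil =>
          have h1 : u :: l₁ = pr.1 :: pr.2 :: r := by simpa using hdec
          injection h1 with h1a h1b
          have hw2 : pr.2 = w := by
            rw [h1b] at hh₁
            simpa using hh₁
          rw [hpe, ← h1a, hw2, ← hgeq]
          exact hgt
        | cons u₀ s' =>
          have h1 : u :: l₁ = u₀ :: (s' ++ pr.1 :: pr.2 :: r) := by simpa using hdec
          injection h1 with _ h1b
          exact htr₁ e ⟨pr, mem_zipTail_iff.mpr ⟨s', r, h1b⟩, hpe⟩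
      have hle := hmax _ hG
      have : l₁.length + 1 ≤ n := by simpa using hle
      omega
    by_cases hwh : l.head? = some w
    · exact hext l hlsp hln hltr hwh hul
    · by_cases hwlast : l.getLast? = some w
      · refine hext l.reverse hlsp.reverse (by simpa using hln)
          (fun e he => hltr e ((connEdges_reverse hor hlsp.2.2.2).mp he))
          (by rw [List.head?_reverse]; exact hwlast) (by simpa using hul)
      · obtain ⟨e₁', e₂', hc1, hc2, hne12, hv1, hv2⟩ :=
          interior_two_connEdges hlsp hwl hwh hwlast
        have hb : Bifurcation D g e₁' e₂' := by
          refine ⟨hgt.1, connEdges_mem_edges hlsp hc1, connEdges_mem_edges hlsp hc2,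
            fun hcon => hgnl (hcon ▸ hc1), fun hcon => hgnl (hcon ▸ hc2), hne12, w, ?_, hv1, hv2⟩
          rw [hgeq]
          exact connEdge_endpoint_right D u w
        exact hbif g e₁' e₂' hb ⟨hgt, hltr _ hc1, hltr _ hc2⟩
  -- assemble
  refine ⟨l, hlsp, hllen, fun e => ⟨hltr e, hcomplete e⟩, ?_⟩
  intro l' hsp' hconn'
  have hcc : ∀ e, connEdges D l' e ↔ connEdges D l e :=
    fun e => (hconn' e).trans ⟨hcomplete e, hltr e⟩
  have hshape2 : ∀ (q : List ℕ), (∀ e, connEdges D q e ↔ connEdges D l e) →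
      ∃ a b t, q = a :: b :: t := by
    intro q hq
    obtain ⟨pr, hpr, -⟩ := (hq e₁).mpr he₁conn
    obtain ⟨s, r, hdec⟩ := mem_zipTail_iff.mp hpr
    cases q with
    | nil =>
      exfalso
      have := congrArg List.length hdec
      simp only [List.length_cons, List.length_nil, List.length_append] at this
      omega
    | cons a t =>
      cases t with
      | nil =>
        exfalso
        have := congrArg List.length hdec
        simp only [List.length_cons, List.length_nil, List.length_append] at this
        omega
      | cons b t' => exact ⟨a, b, t', rfl⟩
  have hheadmem : ∀ (p : List ℕ) (a b : ℕ) (t : List ℕ), D.IsSemipath p → p = a :: b :: t →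
      (∀ e, connEdges D p e ↔ connEdges D l e) →
      l.head? = some a ∨ l.getLast? = some a := by
    intro p a b t hsp hshape hcc'
    have hconnab : connEdges D l (connEdge D a b) :=
      (hcc' _).mp (connEdges_of_decomp (s₁ := []) (by simpa using hshape))
    have hal : a ∈ l := by
      have hmm := connEdges_endpoints_mem hconnab
      rcases connEdge_endpoint_left D a b with h | h
      · rw [h]; exact hmm.1
      · rw [h]; exact hmm.2
    by_contra hcon
    push_neg at hcon
    obtain ⟨e₁', e₂', hc1, hc2, hne12, hv1, hv2⟩ :=
      interior_two_connEdges hlsp hal hcon.1 hcon.2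
    have hsp2 : D.IsSemipath (a :: b :: t) := by rw [← hshape]; exact hsp
    have h1 : e₁' = connEdge D a b :=
      head_unique_connEdge hsp2 (by rw [← hshape]; exact (hcc' e₁').mpr hc1) hv1
    have h2 : e₂' = connEdge D a b :=
      head_unique_connEdge hsp2 (by rw [← hshape]; exact (hcc' e₂').mpr hc2) hv2
    exact hne12 (h1.trans h2.symm)
  obtain ⟨a', b', t', hl'⟩ := hshape2 l' hcc
  have hccrev : ∀ e, connEdges D l'.reverse e ↔ connEdges D l e :=
    fun e => (connEdges_reverse hor hsp'.2.2.2).trans (hcc e)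
  obtain ⟨z', w', r', hl'rev⟩ := hshape2 l'.reverse hccrev
  have hha : l.head? = some a' ∨ l.getLast? = some a' :=
    hheadmem l' a' b' t' hsp' hl' hcc
  have hhz : l.head? = some z' ∨ l.getLast? = some z' :=
    hheadmem l'.reverse z' w' r' hsp'.reverse hl'rev hccrev
  have hhead' : l'.head? = some a' := by rw [hl']; rfl
  have hlast' : l'.getLast? = some z' := by
    rw [← List.head?_reverse, hl'rev]; rfl
  have hne' : a' ≠ z' := head_ne_last_of_nodup hsp'.2.2.1 (by rw [hl']; simp) hhead' hlast'
  rcases hha with hha | hha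
  · left
    have hhz' : l.getLast? = some z' := by
      rcases hhz with hhz | hhz
      · exact absurd (by rw [hha] at hhz; simpa using hhz : a' = z') hne'
      · exact hhz
    exact unique_semipath hor hac hsp' hlsp (hhead'.trans hha.symm) (hlast'.trans hhz'.symm)
  · right
    have hhz' : l.head? = some z' := by
      rcases hhz with hhz | hhz
      · exact hhz
      · exact absurd (by rw [hha] at hhz; simpa using hhz : a' = z') hne'
    have hrev : l'.reverse = l := by
      refine unique_semipath hor hac hsp'.reverse hlsp ?_ ?_
      · rw [List.head?_reverse, hlast', hhz']
      · rw [List.getLast?_reverse, hhead', hha]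
    rw [← hrev, List.reverse_reverse]

end PluralCuts
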